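/- Let A be an NFA. If there exist a state p reachable from an initial state, a word u ≠ ε, two distinct runs π₁ ≠ π₂ from p to p both labeled u, and a path from p to a final state, then A has exponential ambiguity: there exists c > 1 and infinitely many words w such that the number of accepting runs of A on w is at least c^{|w|}. -/

import Mathlib

/-- A nondeterministic finite automaton. -/
structure NFA' (α Q : Type*) where
  start : Set Q
  accept : Set Q
  step : Q → α → Q → Prop

/-- `IsRunFrom M p w ts q`: `ts` is a sequence of transitions of `M` forming a
run from `p` to `q` labelled by the word `w`. -/
def IsRunFrom {α Q : Type*} (M : NFA' α Q) (p : Q) (w : List α)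
    (ts : List (Q × α × Q)) (q : Q) : Prop :=
  ts.map (fun t => t.2.1) = w ∧
  (∀ t ∈ ts, M.step t.1 t.2.1 t.2.2) ∧
  List.Chain' (fun s t => s.2.2 = t.1) ts ∧
  (∀ t, ts.head? = some t → t.1 = p) ∧
  (∀ t, ts.getLast? = some t → t.2.2 = q) ∧
  (ts = [] → p = q)

/-- An accepting run of `M` on `w`, given as a start state, a transition
sequence and an end state. -/
def IsAccRun {α Q : Type*} (M : NFA' α Q) (w : List α)
    (r : Q × List (Q × α × Q) × Q) : Prop :=
  r.1 ∈ M.start ∧ r.2.2 ∈ M.accept ∧ IsRunFrom M r.1 w r.2.1 r.2.2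

private lemma isRunFrom_nil {α Q : Type*} (M : NFA' α Q) (p : Q) :
    IsRunFrom M p [] [] p :=
  ⟨rfl, by simp, List.isChain_nil, by simp, by simp, fun _ => rfl⟩

private lemma isRunFrom_append {α Q : Type*} {M : NFA' α Q} {p q r : Q}
    {w w' : List α} {ts ts' : List (Q × α × Q)}
    (h : IsRunFrom M p w ts q) (h' : IsRunFrom M q w' ts' r) :
    IsRunFrom M p (w ++ w') (ts ++ ts') r := by
  obtain ⟨hm, hs, hc, hh, hl, he⟩ := h
  obtain ⟨hm', hs', hc', hh', hl', he'⟩ := h'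
  refine ⟨by simp [← hm, ← hm'], ?_, ?_, ?_, ?_, ?_⟩
  · intro t ht
    rcases List.mem_append.1 ht with h | h
    exacts [hs t h, hs' t h]
  · show List.IsChain _ (ts ++ ts')
    rw [List.isChain_append]
    refine ⟨hc, hc', ?_⟩
    intro x hx y hy
    rw [hl x (Option.mem_def.mp hx), hh' y (Option.mem_def.mp hy)]
  · intro t ht
    cases ts with
    | nil => exact (he rfl) ▸ hh' t (by simpa using ht)
    | cons a l => exact hh t (by simpa using ht)
  · intro t ht
    rcases eq_or_ne ts' [] with rfl | hne'
    · rw [List.append_nil] at ht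
      rw [hl t ht, he' rfl]
    · rw [List.getLast?_append, Option.or_eq_some_iff] at ht
      rcases ht with ht | ⟨htn, ht⟩
      · exact hl' t ht
      · exact absurd (List.getLast?_eq_none_iff.mp htn) hne'
  · intro h
    rw [List.append_eq_nil_iff] at h
    exact (he h.1).trans (he' h.2)

private lemma isRunFrom_flatten {α Q : Type*} {M : NFA' α Q} {p : Q} {u : List α} :
    ∀ (L : List (List (Q × α × Q))), (∀ x ∈ L, IsRunFrom M p u x p) →
      IsRunFrom M p (List.replicate L.length u).flatten L.flatten p
  | [], _ => by simpa using isRunFrom_nil M p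
  | x :: L, h => by
    simp only [List.length_cons, List.replicate_succ, List.flatten_cons]
    exact isRunFrom_append (h x (by simp))
      (isRunFrom_flatten L fun y hy => h y (List.mem_cons_of_mem _ hy))

private lemma flatten_inj {β : Type*} {L : ℕ} :
    ∀ (l₁ l₂ : List (List β)), l₁.length = l₂.length →
      (∀ x ∈ l₁, x.length = L) → (∀ x ∈ l₂, x.length = L) →
      l₁.flatten = l₂.flatten → l₁ = l₂
  | [], [], _, _, _, _ => rfl
  | [], _ :: _, h, _, _, _ => by simp at h
  | _ :: _, [], h, _, _, _ => by simp at h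
  | x :: l₁, y :: l₂, h, h₁, h₂, hj => by
    simp only [List.flatten_cons] at hj
    obtain ⟨hxy, hj'⟩ := List.append_inj hj
      (by rw [h₁ x (by simp), h₂ y (by simp)])
    have hrest := flatten_inj l₁ l₂ (by simpa using h)
      (fun a ha => h₁ a (by simp [ha])) (fun a ha => h₂ a (by simp [ha])) hj'
    rw [hxy, hrest]

private lemma finite_accRun {α Q : Type*} [Finite Q] (M : NFA' α Q) (w : List α)
    (d : Q × α × Q) :
    Finite {r : Q × List (Q × α × Q) × Q // IsAccRun M w r} := by
  have key : Function.Injective (fun r : {r : Q × List (Q × α × Q) × Q // IsAccRun M w r} =>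
      ((r.1.1, r.1.2.2), fun i : Fin w.length =>
        ((r.1.2.1.getD i d).1, (r.1.2.1.getD i d).2.2))) := by
    intro r r' hrr
    have hm : r.1.2.1.map (fun t => t.2.1) = w := r.2.2.2.1
    have hm' : r'.1.2.1.map (fun t => t.2.1) = w := r'.2.2.2.1
    have hlen : r.1.2.1.length = w.length := by simpa using congrArg List.length hm
    have hlen' : r'.1.2.1.length = w.length := by simpa using congrArg List.length hm'
    have h1 : r.1.1 = r'.1.1 := congrArg (fun x => x.1.1) hrr
    have h3 : r.1.2.2 = r'.1.2.2 := congrArg (fun x => x.1.2) hrr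
    have hf := congrArg Prod.snd hrr
    simp only at hf
    have h2 : r.1.2.1 = r'.1.2.1 := by
      apply List.ext_get (hlen.trans hlen'.symm)
      intro n hn1 hn2
      have hfn := congrFun hf ⟨n, hlen ▸ hn1⟩
      simp only [List.getD_eq_getElem (hn := hn1), List.getD_eq_getElem (hn := hn2), Prod.mk.injEq] at hfn
      have lab : (r.1.2.1.get ⟨n, hn1⟩).2.1 = (r'.1.2.1.get ⟨n, hn2⟩).2.1 := by
        have hq := congrArg (fun l => l[n]?) (hm.trans hm'.symm)
        simp only [List.getElem?_map, List.getElem?_eq_getElem hn1,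
          List.getElem?_eq_getElem hn2, Option.map_some, Option.some.injEq] at hq
        simpa using hq
      exact Prod.ext hfn.1 (Prod.ext lab hfn.2)
    apply Subtype.ext
    exact Prod.ext h1 (Prod.ext h2 h3)
  exact Finite.of_injective _ key

/-- If some state `p` is reachable from an initial state, carries two distinct
runs `π₁ ≠ π₂` from `p` to `p` both labelled by the same nonempty word `u`, and
reaches a final state, then the NFA has exponential ambiguity: there are `c > 1`
and infinitely many words `w` whose number of accepting runs is at least `c^|w|`. -/
theorem exponential_ambiguity {α Q : Type*} [Fintype Q] (M : NFA' α Q)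
    (p qI qF : Q) (w₀ w₁ u : List α) (t₀ t₁ π₁ π₂ : List (Q × α × Q))
    (hu : u ≠ []) (hqI : qI ∈ M.start) (h₀ : IsRunFrom M qI w₀ t₀ p)
    (h₁ : IsRunFrom M p u π₁ p) (h₂ : IsRunFrom M p u π₂ p) (hne : π₁ ≠ π₂)
    (hqF : qF ∈ M.accept) (h₃ : IsRunFrom M p w₁ t₁ qF) :
    ∃ c : ℝ, 1 < c ∧
      Set.Infinite { w : List α |
        c ^ w.length ≤ (Nat.card {r : Q × List (Q × α × Q) × Q // IsAccRun M w r} : ℝ) } := by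
  classical
  -- basic data
  have hu0 : 0 < u.length := List.length_pos_iff.2 hu
  set N : ℕ := w₀.length + u.length + w₁.length with hNdef
  have hN : 0 < N := by omega
  -- the word for each k
  set W : ℕ → List α := fun k => w₀ ++ (List.replicate k u).flatten ++ w₁ with hW
  have hWlen : ∀ k, (W k).length = w₀.length + k * u.length + w₁.length := by
    intro k
    simp [hW, List.length_flatten, List.map_replicate, List.sum_replicate, smul_eq_mul]
    omega
  -- lengths of the loops
  have hπ₁len : π₁.length = u.length := by rw [← h₁.1]; simp
  have hπ₂len : π₂.length = u.length := by rw [← h₂.1]; simp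
  -- the injection from Bool vectors into accepting runs
  have hblk : ∀ b : Bool, IsRunFrom M p u (if b then π₁ else π₂) p := by
    intro b; cases b <;> simpa
  have key : ∀ k : ℕ, 2 ^ k ≤ Nat.card {r : Q × List (Q × α × Q) × Q // IsAccRun M (W k) r} := by
    intro k
    have hfin := finite_accRun M (W k) (p, u.head hu, p)
    set F : (Fin k → Bool) → {r : Q × List (Q × α × Q) × Q // IsAccRun M (W k) r} :=
      fun b => ⟨(qI, t₀ ++ (List.ofFn fun i => if b i then π₁ else π₂).flatten ++ t₁, qF),
        hqI, hqF, by
          have hmid : IsRunFrom M p (List.replicate k u).flatten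
              (List.ofFn fun i => if b i then π₁ else π₂).flatten p := by
            have := isRunFrom_flatten (M := M) (p := p) (u := u)
              (List.ofFn fun i => if b i then π₁ else π₂)
              (List.forall_mem_ofFn_iff.mpr fun j => hblk (b j))
            simpa using this
          exact isRunFrom_append (isRunFrom_append h₀ hmid) h₃⟩ with hF
    have hFinj : Function.Injective F := by
      intro b b' hbb
      have hts : t₀ ++ (List.ofFn fun i => if b i then π₁ else π₂).flatten ++ t₁
          = t₀ ++ (List.ofFn fun i => if b' i then π₁ else π₂).flatten ++ t₁ := by
        have := congrArg (fun r => r.1.2.1) hbb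
        simpa [hF] using this
      have hflat : (List.ofFn fun i => if b i then π₁ else π₂).flatten
          = (List.ofFn fun i => if b' i then π₁ else π₂).flatten := by
        have h' := List.append_cancel_right hts
        exact List.append_cancel_left h'
      have hofn : (List.ofFn fun i => if b i then π₁ else π₂)
          = (List.ofFn fun i => if b' i then π₁ else π₂) :=
        flatten_inj (L := u.length) _ _ (by simp)
          (List.forall_mem_ofFn_iff.mpr fun j => by
              cases b j <;> simp [hπ₁len, hπ₂len])
          (List.forall_mem_ofFn_iff.mpr fun j => by
              cases b' j <;> simp [hπ₁len, hπ₂len]) hflat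
      funext i
      have := congrFun (List.ofFn_injective hofn) i
      by_contra hib
      cases hbi : b i <;> cases hbi' : b' i <;>
        simp_all
    calc 2 ^ k = Nat.card (Fin k → Bool) := by
          simp [Nat.card_eq_fintype_card]
      _ ≤ _ := Nat.card_le_card_of_injective F hFinj
  -- the constant
  refine ⟨(2 : ℝ) ^ ((N : ℝ)⁻¹), ?_, ?_⟩
  · rw [Real.one_lt_rpow_iff_of_pos (by norm_num)]
    left
    constructor
    · norm_num
    · positivity
  · apply Set.infinite_of_injective_forall_mem (f := fun n : ℕ => W (n + 1))
    · intro n m hnm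
      have := congrArg List.length hnm
      rw [hWlen, hWlen] at this
      have : (n + 1) * u.length = (m + 1) * u.length := by omega
      have := Nat.eq_of_mul_eq_mul_right hu0 this
      omega
    · intro n
      set k := n + 1 with hk
      show ((2 : ℝ) ^ ((N : ℝ)⁻¹)) ^ (W k).length ≤ _
      have hkey := key k
      have step1 : ((2 : ℝ) ^ ((N : ℝ)⁻¹)) ^ (W k).length
          = (2 : ℝ) ^ (((N : ℝ)⁻¹) * ((W k).length : ℝ)) := by
        rw [Real.rpow_mul (by norm_num), Real.rpow_natCast]
      have step2 : (2 : ℝ) ^ (((N : ℝ)⁻¹) * ((W k).length : ℝ)) ≤ (2 : ℝ) ^ (k : ℝ) := by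
        rw [Real.rpow_le_rpow_left_iff (by norm_num : (1:ℝ) < 2)]
        rw [inv_mul_le_iff₀ (by positivity)]
        have hle : (W k).length ≤ N * k := by
          rw [hWlen, hNdef]
          have : 1 ≤ k := by omega
          nlinarith
        calc ((W k).length : ℝ) ≤ (N * k : ℕ) := by exact_mod_cast hle
          _ = (N : ℝ) * k := by push_cast; ring
      have step3 : (2 : ℝ) ^ (k : ℝ) ≤
          (Nat.card {r : Q × List (Q × α × Q) × Q // IsAccRun M (W k) r} : ℝ) := by
        rw [Real.rpow_natCast]
        calc (2 : ℝ) ^ k = ((2 ^ k : ℕ) : ℝ) := by push_cast; ring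
          _ ≤ _ := by exact_mod_cast hkey
      calc ((2 : ℝ) ^ ((N : ℝ)⁻¹)) ^ (W k).length = _ := step1
        _ ≤ (2 : ℝ) ^ (k : ℝ) := step2
        _ ≤ _ := step3
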